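/- Assume (q, n) is admissible. Then the natural action of AGL_1^{(n)}(q) on F is primitive: it is transitive, and the stabiliser of each point of F is a maximal subgroup of AGL_1^{(n)}(q). -/

import Mathlib

lemma closure_S_top (p e n : ℕ) (hp : p.Prime) (he : 1 ≤ e)
    (F : Type) [Field F] [Fintype F] (hq : Fintype.card F = p ^ e)
    (hadm : IsLeast {i : ℕ | 1 ≤ i ∧ p ^ i ≡ 1 [MOD n]} e)
    (S : Subgroup Fˣ) (hS : Nat.card S = n) :
    Subring.closure (Units.val '' (S : Set Fˣ)) = ⊤ := by
  classical
  haveI hchar : CharP F p := by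
    have h := ringChar.charP F
    obtain ⟨m, hr, hcard⟩ := FiniteField.card F (ringChar F)
    rw [hq] at hcard
    have hdvd : p ∣ ringChar F ^ (m : ℕ) := hcard ▸ dvd_pow_self p (Nat.one_le_iff_ne_zero.mp he)
    have hrp : ringChar F = p :=
      ((Nat.prime_dvd_prime_iff_eq hp hr).mp (hp.dvd_of_dvd_pow hdvd)).symm
    rwa [hrp] at h
  set K := Subring.closure (Units.val '' (S : Set Fˣ)) with hK
  haveI : Fintype K := Fintype.ofFinite K
  letI : Field K := Fintype.fieldOfDomain K
  obtain ⟨m, -, hcardK⟩ := FiniteField.card K p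
  obtain ⟨g, hg⟩ := IsCyclic.exists_generator (α := S)
  have hordg : orderOf g = n := by
    rw [orderOf_eq_card_of_forall_mem_zpowers hg]; exact hS
  have hordζ : orderOf (g : Fˣ) = n := by
    rw [← hordg]; exact orderOf_injective S.subtype Subtype.coe_injective g
  have hζK : ((g : Fˣ) : F) ∈ K := Subring.subset_closure ⟨(g : Fˣ), g.2, rfl⟩
  have hζne : ((g : Fˣ) : F) ≠ 0 := Units.ne_zero _
  have hpow : ((g : Fˣ) : F) ^ (p ^ (m : ℕ) - 1) = 1 := by
    have h1 : (⟨((g : Fˣ) : F), hζK⟩ : K) ^ (Fintype.card K - 1) = 1 :=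
      FiniteField.pow_card_sub_one_eq_one _ (fun h => hζne (congrArg Subtype.val h))
    rw [hcardK] at h1
    simpa using congrArg Subtype.val h1
  have hdvd : n ∣ p ^ (m : ℕ) - 1 := by
    rw [← hordζ]
    exact orderOf_dvd_of_pow_eq_one (Units.ext (by simpa using hpow))
  have hm1 : 1 ≤ p ^ (m : ℕ) := Nat.one_le_pow _ _ hp.pos
  have hmod : p ^ (m : ℕ) ≡ 1 [MOD n] := ((Nat.modEq_iff_dvd' hm1).mpr hdvd).symm
  have hem : e ≤ (m : ℕ) := hadm.2 ⟨m.2, hmod⟩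
  have hcardle : Fintype.card K ≤ Fintype.card F :=
    Fintype.card_le_of_injective _ Subtype.coe_injective
  rw [hcardK, hq] at hcardle
  have hme : (m : ℕ) ≤ e := (Nat.pow_le_pow_iff_right hp.one_lt).mp hcardle
  have hcards : Nat.card K = Nat.card F := by
    rw [Nat.card_eq_fintype_card, Nat.card_eq_fintype_card, hcardK, hq, le_antisymm hme hem]
  have htop : K.toAddSubgroup = ⊤ := AddSubgroup.eq_top_of_card_eq _ hcards
  ext x
  simp only [Subring.mem_top, iff_true]
  have hx : x ∈ K.toAddSubgroup := htop ▸ AddSubgroup.mem_top x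
  exact hx

/-- Let `p` be prime, `e ≥ 1`, `q = p^e`, `F` a finite field with `q`
elements, `n` a divisor of `q - 1` (even if `p` is odd), and `S` the subgroup of order
`n` of `Fˣ`.  Assume `(q, n)` is admissible, and let `A = AGL₁⁽ⁿ⁾(q)` be the subgroup
of `Perm F` of affine maps `v ↦ a v + b` with `a ∈ S`, `b ∈ F`.  Then the natural
action of `A` on `F` is primitive: it is transitive, and the stabiliser of each point
of `F` is a maximal (proper) subgroup of `A`. -/
theorem AGL_primitive_on_F
    (p e n : ℕ) (hp : p.Prime) (he : 1 ≤ e)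
    (F : Type) [Field F] [Fintype F] (hq : Fintype.card F = p ^ e)
    (hn : n ∣ p ^ e - 1) (hpar : Odd p → Even n)
    (S : Subgroup Fˣ) (hS : Nat.card S = n)
    (hadm : IsLeast {i : ℕ | 1 ≤ i ∧ p ^ i ≡ 1 [MOD n]} e)
    (A : Subgroup (Equiv.Perm F))
    (hA : ∀ g : Equiv.Perm F,
      g ∈ A ↔ ∃ a ∈ S, ∃ b : F, ∀ v : F, g v = (a : F) * v + b) :
    (∀ v w : F, ∃ g ∈ A, g v = w) ∧
      ∀ v : F, IsCoatom ((MulAction.stabilizer (Equiv.Perm F) v).subgroupOf A) := by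
  classical
  -- the affine permutation x ↦ a x + b
  let aff : Fˣ → F → Equiv.Perm F := fun a b =>
    (Equiv.mulLeft₀ (a : F) a.ne_zero).trans (Equiv.addRight b)
  have haff : ∀ (a : Fˣ) (b x : F), aff a b x = (a : F) * x + b := fun a b x => rfl
  have haffA : ∀ a : Fˣ, a ∈ S → ∀ b : F, aff a b ∈ A := fun a ha b =>
    (hA _).mpr ⟨a, ha, b, fun x => rfl⟩
  have htA : ∀ c : F, aff 1 c ∈ A := haffA 1 S.one_mem
  constructor
  · intro v w
    refine ⟨aff 1 (w - v), htA (w - v), ?_⟩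
    rw [haff]; simp
  intro v
  have hmemSt : ∀ gA : A,
      (gA ∈ (MulAction.stabilizer (Equiv.Perm F) v).subgroupOf A ↔ (gA : Equiv.Perm F) v = v) := by
    intro gA
    rw [Subgroup.mem_subgroupOf, MulAction.mem_stabilizer_iff]
    rfl
  constructor
  · -- the stabiliser is a proper subgroup
    intro htop
    have h1 : (⟨aff 1 1, htA 1⟩ : A) ∈ (MulAction.stabilizer (Equiv.Perm F) v).subgroupOf A :=
      htop ▸ Subgroup.mem_top _
    rw [hmemSt] at h1
    rw [haff] at h1
    simp at h1
  · -- maximality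
    intro H hH
    have hle := hH.le
    -- the stabiliser elements x ↦ a(x - v) + v
    have hsaSt : ∀ (a : Fˣ) (ha : a ∈ S),
        (⟨aff a (v - (a : F) * v), haffA a ha _⟩ : A) ∈
          (MulAction.stabilizer (Equiv.Perm F) v).subgroupOf A := by
      intro a ha
      rw [hmemSt, haff]; ring
    -- basic closure properties of translations lying in H
    have hW0 : (⟨aff 1 0, htA 0⟩ : A) ∈ H := by
      have h1 : (⟨aff 1 0, htA 0⟩ : A) = 1 := Subtype.ext (by ext x; rw [haff]; simp)
      rw [h1]; exact H.one_mem
    have hWadd : ∀ c c' : F, (⟨aff 1 c, htA c⟩ : A) ∈ H → (⟨aff 1 c', htA c'⟩ : A) ∈ H →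
        (⟨aff 1 (c + c'), htA (c + c')⟩ : A) ∈ H := by
      intro c c' hc hc'
      have h1 : (⟨aff 1 (c + c'), htA (c + c')⟩ : A) = ⟨aff 1 c, htA c⟩ * ⟨aff 1 c', htA c'⟩ := by
        refine Subtype.ext ?_
        ext x
        simp only [Subgroup.coe_mul, Equiv.Perm.mul_apply, haff]
        push_cast; ring
      rw [h1]; exact H.mul_mem hc hc'
    have hWneg : ∀ c : F, (⟨aff 1 c, htA c⟩ : A) ∈ H →
        (⟨aff 1 (-c), htA (-c)⟩ : A) ∈ H := by
      intro c hc
      have h1 : (⟨aff 1 (-c), htA (-c)⟩ : A) = (⟨aff 1 c, htA c⟩ : A)⁻¹ := by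
        refine Subtype.ext ?_
        refine eq_inv_of_mul_eq_one_left ?_
        ext x
        simp only [Equiv.Perm.mul_apply, haff, Equiv.Perm.coe_one, id_eq, Units.val_one]
        ring
      rw [h1]; exact H.inv_mem hc
    -- closure under multiplication by elements of S
    have hWS : ∀ (a : Fˣ), a ∈ S → ∀ c : F, (⟨aff 1 c, htA c⟩ : A) ∈ H →
        (⟨aff 1 ((a : F) * c), htA _⟩ : A) ∈ H := by
      intro a ha c hc
      set saA : A := ⟨aff a (v - (a : F) * v), haffA a ha _⟩ with hsa
      have hperm : (saA : Equiv.Perm F) * aff 1 c = aff 1 ((a : F) * c) * (saA : Equiv.Perm F) := by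
        ext x
        simp only [Equiv.Perm.mul_apply, haff, hsa]
        push_cast; ring
      have h1 : (⟨aff 1 ((a : F) * c), htA _⟩ : A) = saA * ⟨aff 1 c, htA c⟩ * saA⁻¹ := by
        refine Subtype.ext ?_
        have : (saA : Equiv.Perm F) * (⟨aff 1 c, htA c⟩ : A) * (saA : Equiv.Perm F)⁻¹ =
            aff 1 ((a : F) * c) := by
          rw [hperm, mul_assoc]
          simp
        simpa [mul_assoc] using this.symm
      rw [h1]
      exact H.mul_mem (H.mul_mem (hle (hsaSt a ha)) hc) (H.inv_mem (hle (hsaSt a ha)))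
    -- closure under multiplication by any element of F, via the subring generated by S
    have hWF : ∀ x : F, ∀ c : F, (⟨aff 1 c, htA c⟩ : A) ∈ H →
        (⟨aff 1 (x * c), htA _⟩ : A) ∈ H := by
      let R : Subring F :=
        { carrier := {x : F | ∀ c : F, (⟨aff 1 c, htA c⟩ : A) ∈ H →
            (⟨aff 1 (x * c), htA _⟩ : A) ∈ H}
          zero_mem' := fun c hc => by rw [zero_mul] ; exact hW0
          one_mem' := fun c hc => by rw [one_mul] ; exact hc
          add_mem' := fun {x y} hx hy c hc => by
            rw [add_mul]; exact hWadd _ _ (hx c hc) (hy c hc)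
          neg_mem' := fun {x} hx c hc => by rw [neg_mul]; exact hWneg _ (hx c hc)
          mul_mem' := fun {x y} hx hy c hc => by rw [mul_assoc]; exact hx _ (hy c hc) }
      have hsub : Subring.closure (Units.val '' (S : Set Fˣ)) ≤ R := by
        rw [Subring.closure_le]
        rintro _ ⟨a, ha, rfl⟩
        exact hWS a ha
      have := closure_S_top p e n hp he F hq hadm S hS
      intro x
      exact hsub (this ▸ Subring.mem_top x)
    -- translations in H form an ideal of F
    let I : Ideal F :=
      { carrier := {c : F | (⟨aff 1 c, htA c⟩ : A) ∈ H}
        zero_mem' := hW0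
        add_mem' := fun {c c'} hc hc' => hWadd c c' hc hc'
        smul_mem' := fun r c hc => by simpa [smul_eq_mul] using hWF r c hc }
    -- every element of H differs from a stabiliser element by a translation in H
    have hkey : ∀ gA : A, gA ∈ H → (((gA : Equiv.Perm F) v - v) ∈ I) := by
      intro gA hgA
      obtain ⟨a, ha, b, hab⟩ := (hA _).mp gA.2
      have hcv : (gA : Equiv.Perm F) v - v = (a : F) * v + b - v := by rw [hab]
      set saA : A := ⟨aff a⁻¹ (v - ((a⁻¹ : Fˣ) : F) * v), haffA a⁻¹ (S.inv_mem ha) _⟩ with hsa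
      have h1 : (⟨aff 1 ((gA : Equiv.Perm F) v - v), htA _⟩ : A) = gA * saA := by
        refine Subtype.ext ?_
        ext x
        simp only [Subgroup.coe_mul, Equiv.Perm.mul_apply, haff, hab, hcv, hsa, Units.val_one]
        rw [Units.val_inv_eq_inv_val]
        field_simp
        ring
      show (⟨aff 1 ((gA : Equiv.Perm F) v - v), htA _⟩ : A) ∈ H
      rw [h1]
      exact H.mul_mem hgA (hle (hsaSt a⁻¹ (S.inv_mem ha)))
    rcases I.eq_bot_or_top with hbot | htop
    · -- impossible: H strictly contains the stabiliser
      exfalso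
      obtain ⟨g0, hg0H, hg0st⟩ := SetLike.exists_of_lt hH
      have hc0 : ((g0 : Equiv.Perm F) v - v) ∈ I := hkey g0 hg0H
      rw [hbot, Ideal.mem_bot, sub_eq_zero] at hc0
      exact hg0st ((hmemSt g0).mpr hc0)
    · -- H = ⊤
      rw [Subgroup.eq_top_iff']
      intro gA
      obtain ⟨a, ha, b, hab⟩ := (hA _).mp gA.2
      set c : F := (gA : Equiv.Perm F) v - v with hc
      have hcI : c ∈ I := htop ▸ Submodule.mem_top
      have hcH : (⟨aff 1 c, htA c⟩ : A) ∈ H := hcI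
      have hb : b = c + v - (a : F) * v := by
        rw [hc, hab]; ring
      have h1 : gA = (⟨aff 1 c, htA c⟩ : A) * ⟨aff a (v - (a : F) * v), haffA a ha _⟩ := by
        refine Subtype.ext ?_
        ext x
        simp only [Subgroup.coe_mul, Equiv.Perm.mul_apply, haff, hab, hb]
        push_cast; ring
      rw [h1]
      exact H.mul_mem hcH (hle (hsaSt a ha))
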